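/- Assume ξ and η are mutually singular. Let s₁ < s₂, let v₁ ∈ [0, max(ξ{s₁}, η{s₁})] and v₂ ∈ [0, max(ξ{s₂}, η{s₂})]. Then ξ*[ζ(s₁)+v₁, ζ(s₂)+v₂] = 1{η{s₁}=0}·(ξ{s₁} − v₁) + ξ((s₁,s₂)) + 1{η{s₂}=0}·v₂. -/

import Mathlib

open MeasureTheory Set
open scoped ENNReal

/-- The purely atomic part `μ^d` of a measure on `ℝ`. -/
noncomputable def atomicPart (μ : Measure ℝ) : Measure ℝ :=
  μ.restrict {t : ℝ | μ {t} ≠ 0}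

/-- The diffuse part `μ^c` of a measure on `ℝ`. -/
noncomputable def diffusePart (μ : Measure ℝ) : Measure ℝ :=
  μ.restrict {t : ℝ | μ {t} = 0}

/-- The time change `ζ`, stretching the real axis at each atom of `ξ` or `η`
by the size of the atom. -/
noncomputable def zeta (ξ η : Measure ℝ) (s : ℝ) : ℝ :=
  if 0 ≤ s then
    s + (atomicPart ξ (Set.Ico 0 s)).toReal + (atomicPart η (Set.Ico 0 s)).toReal
  else
    s - (atomicPart ξ (Set.Ico s 0)).toReal - (atomicPart η (Set.Ico s 0)).toReal

/-- The stretched measure `μ*` built from `μ` using the time change `ζ` of the pair `(ξ, η)`: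
`μ*(C) = ∫ 1{ζ(t) ∈ C} μ^c(dt)
  + ∬ 1{ζ(t) ≤ v ≤ ζ(t) + μ{t}, v ∈ C} μ{t}⁻¹ dv μ^d(dt)`. -/
noncomputable def starM (ξ η μ : Measure ℝ) : Measure ℝ :=
  (diffusePart μ).map (zeta ξ η) +
    (atomicPart μ).bind fun t =>
      (μ {t})⁻¹ • volume.restrict (Set.Icc (zeta ξ η t) (zeta ξ η t + (μ {t}).toReal))

lemma meas_singleton_ne_top (μ : Measure ℝ) [IsLocallyFiniteMeasure μ] (s : ℝ) :
    μ {s} ≠ ⊤ := (isCompact_singleton.measure_lt_top).ne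

lemma atomic_Ico_ne_top (μ : Measure ℝ) [IsLocallyFiniteMeasure μ] (a b : ℝ) :
    atomicPart μ (Ico a b) ≠ ⊤ := by
  have h1 : atomicPart μ (Ico a b) ≤ μ (Ico a b) := Measure.restrict_le_self _
  have h2 : μ (Ico a b) ≤ μ (Icc a b) := measure_mono Ico_subset_Icc_self
  exact ((h1.trans h2).trans_lt isCompact_Icc.measure_lt_top).ne

lemma atomicPart_singleton (μ : Measure ℝ) (s : ℝ) : atomicPart μ {s} = μ {s} := by
  rw [atomicPart, Measure.restrict_apply (measurableSet_singleton s)]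
  by_cases h : μ {s} = 0
  · have : ({s} : Set ℝ) ∩ {t : ℝ | μ {t} ≠ 0} = ∅ := by
      ext x; simp only [mem_inter_iff, mem_singleton_iff, mem_setOf_eq, mem_empty_iff_false,
        iff_false, not_and]
      rintro rfl; simpa using h
    rw [this]; simp [h]
  · have : ({s} : Set ℝ) ∩ {t : ℝ | μ {t} ≠ 0} = {s} := by
      refine inter_eq_self_of_subset_left ?_
      rintro x rfl; exact h
    rw [this]

lemma atomic_Ico_toReal_add (μ : Measure ℝ) [IsLocallyFiniteMeasure μ] {x y z : ℝ}
    (h1 : x ≤ y) (h2 : y ≤ z) :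
    ((atomicPart μ) (Ico x z)).toReal =
      ((atomicPart μ) (Ico x y)).toReal + ((atomicPart μ) (Ico y z)).toReal := by
  rw [← Ico_union_Ico_eq_Ico h1 h2,
    measure_union (Ico_disjoint_Ico_same) measurableSet_Ico,
    ENNReal.toReal_add (atomic_Ico_ne_top μ x y) (atomic_Ico_ne_top μ y z)]

lemma zeta_add (ξ η : Measure ℝ) [IsLocallyFiniteMeasure ξ] [IsLocallyFiniteMeasure η]
    {a b : ℝ} (hab : a ≤ b) :
    zeta ξ η b = zeta ξ η a + (b - a) + (atomicPart ξ (Ico a b)).toReal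
      + (atomicPart η (Ico a b)).toReal := by
  rcases le_or_gt 0 a with ha | ha
  · have hb : 0 ≤ b := le_trans ha hab
    rw [zeta, zeta, if_pos ha, if_pos hb,
      atomic_Ico_toReal_add ξ ha hab, atomic_Ico_toReal_add η ha hab]
    ring
  · rcases le_or_gt 0 b with hb | hb
    · rw [zeta, zeta, if_pos hb, if_neg (not_le.2 ha),
        show Ico a b = Ico a 0 ∪ Ico 0 b from (Ico_union_Ico_eq_Ico ha.le hb).symm,
        measure_union (Ico_disjoint_Ico_same) measurableSet_Ico,
        measure_union (Ico_disjoint_Ico_same) measurableSet_Ico,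
        ENNReal.toReal_add (atomic_Ico_ne_top ξ a 0) (atomic_Ico_ne_top ξ 0 b),
        ENNReal.toReal_add (atomic_Ico_ne_top η a 0) (atomic_Ico_ne_top η 0 b)]
      ring
    · rw [zeta, zeta, if_neg (not_le.2 hb), if_neg (not_le.2 ha),
        atomic_Ico_toReal_add ξ hab hb.le, atomic_Ico_toReal_add η hab hb.le]
      ring

lemma zeta_mono (ξ η : Measure ℝ) [IsLocallyFiniteMeasure ξ] [IsLocallyFiniteMeasure η] :
    Monotone (zeta ξ η) := by
  intro a b hab
  rw [zeta_add ξ η hab]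
  have h1 := ENNReal.toReal_nonneg (a := atomicPart ξ (Ico a b))
  have h2 := ENNReal.toReal_nonneg (a := atomicPart η (Ico a b))
  linarith

lemma zeta_jump (ξ η : Measure ℝ) [IsLocallyFiniteMeasure ξ] [IsLocallyFiniteMeasure η]
    {a b : ℝ} (hab : a < b) :
    zeta ξ η a + (b - a) + (ξ {a}).toReal + (η {a}).toReal ≤ zeta ξ η b := by
  rw [zeta_add ξ η hab.le]
  have key : ∀ (μ : Measure ℝ) [IsLocallyFiniteMeasure μ],
      (μ {a}).toReal ≤ (atomicPart μ (Ico a b)).toReal := by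
    intro μ _
    rw [← atomicPart_singleton μ a]
    exact ENNReal.toReal_le_toReal
      (ne_top_of_le_ne_top (atomic_Ico_ne_top μ a b)
        (measure_mono (singleton_subset_iff.2 ⟨le_refl a, hab⟩)))
      (atomic_Ico_ne_top μ a b) |>.mpr
      (measure_mono (singleton_subset_iff.2 ⟨le_refl a, hab⟩))
  have := key ξ; have := key η
  linarith [key ξ, key η]

lemma atoms_disjoint {ξ η : Measure ℝ} (hsing : ξ ⟂ₘ η) {s : ℝ} (hξ : ξ {s} ≠ 0) :
    η {s} = 0 := by
  obtain ⟨S, hSm, hξS, hηSc⟩ := hsing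
  have hs : s ∉ S := by
    intro hs
    exact hξ (le_antisymm ((measure_mono (singleton_subset_iff.2 hs)).trans hξS.le) zero_le)
  exact le_antisymm ((measure_mono (show {s} ⊆ Sᶜ from singleton_subset_iff.2 hs)).trans hηSc.le) zero_le

lemma measurable_meas_singleton (μ : Measure ℝ) [SigmaFinite μ] :
    Measurable fun t : ℝ => μ {t} := by
  have hd : MeasurableSet {p : ℝ × ℝ | p.2 = p.1} :=
    measurableSet_eq_fun measurable_snd measurable_fst
  have h := measurable_measure_prodMk_left (ν := μ) hd
  have he : ∀ t : ℝ, (Prod.mk t ⁻¹' {p : ℝ × ℝ | p.2 = p.1}) = {t} := by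
    intro t; ext y; simp [Set.mem_preimage]
  simpa only [he] using h

lemma measurable_kernel (ξ η : Measure ℝ) [IsLocallyFiniteMeasure ξ] [IsLocallyFiniteMeasure η] :
    Measurable fun t : ℝ =>
      (ξ {t})⁻¹ • volume.restrict (Icc (zeta ξ η t) (zeta ξ η t + (ξ {t}).toReal)) := by
  apply Measure.measurable_of_measurable_coe
  intro s hs
  simp only [Measure.smul_apply, Measure.restrict_apply hs, smul_eq_mul]
  have hζ : Measurable (zeta ξ η) := (zeta_mono ξ η).measurable
  have hμ : Measurable fun t : ℝ => ξ {t} := measurable_meas_singleton ξ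
  have hr : Measurable fun t : ℝ => (ξ {t}).toReal := hμ.ennreal_toReal
  have hS : MeasurableSet {p : ℝ × ℝ | p.2 ∈ s ∧ zeta ξ η p.1 ≤ p.2 ∧
      p.2 ≤ zeta ξ η p.1 + (ξ {p.1}).toReal} := by
    refine MeasurableSet.inter (measurable_snd hs) (MeasurableSet.inter ?_ ?_)
    · exact measurableSet_le (hζ.comp measurable_fst) measurable_snd
    · exact measurableSet_le measurable_snd ((hζ.comp measurable_fst).add (hr.comp measurable_fst))
  have hvol := measurable_measure_prodMk_left (ν := volume) hS
  have he : ∀ t : ℝ, (Prod.mk t ⁻¹' {p : ℝ × ℝ | p.2 ∈ s ∧ zeta ξ η p.1 ≤ p.2 ∧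
      p.2 ≤ zeta ξ η p.1 + (ξ {p.1}).toReal}) = s ∩ Icc (zeta ξ η t) (zeta ξ η t + (ξ {t}).toReal) := by
    intro t; ext y
    simp [Set.mem_preimage, Set.mem_Icc, and_assoc]; tauto
  simp only [he] at hvol
  exact hμ.inv.mul hvol

lemma le_toReal_of_ofReal_le {w : ℝ} (hw : 0 ≤ w) {x : ℝ≥0∞} (hx : x ≠ ⊤)
    (h : ENNReal.ofReal w ≤ x) : w ≤ x.toReal := by
  rw [← ENNReal.toReal_ofReal hw]
  exact (ENNReal.toReal_le_toReal ENNReal.ofReal_ne_top hx).mpr h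

/-- Lemma 3.2: the `ξ*`-measure of the stretched closed interval
`[ζ(s₁) + v₁, ζ(s₂) + v₂]`. -/
theorem starM_Icc (ξ η : Measure ℝ)
    [IsLocallyFiniteMeasure ξ] [IsLocallyFiniteMeasure η]
    (hsing : ξ ⟂ₘ η) (s₁ s₂ : ℝ) (h : s₁ < s₂) (v₁ v₂ : ℝ)
    (hv₁0 : 0 ≤ v₁) (hv₁ : ENNReal.ofReal v₁ ≤ max (ξ {s₁}) (η {s₁}))
    (hv₂0 : 0 ≤ v₂) (hv₂ : ENNReal.ofReal v₂ ≤ max (ξ {s₂}) (η {s₂})) :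
    starM ξ η ξ (Set.Icc (zeta ξ η s₁ + v₁) (zeta ξ η s₂ + v₂))
      = (if η {s₁} = 0 then ξ {s₁} - ENNReal.ofReal v₁ else 0)
        + ξ (Set.Ioo s₁ s₂)
        + (if η {s₂} = 0 then ENNReal.ofReal v₂ else 0) := by
  have hζm : Measurable (zeta ξ η) := (zeta_mono ξ η).measurable
  set L := zeta ξ η s₁ + v₁ with hL
  set R := zeta ξ η s₂ + v₂ with hR
  set C := Set.Icc L R with hCdef
  have hC : MeasurableSet C := measurableSet_Icc
  have hA : MeasurableSet {t : ℝ | ξ {t} = 0} :=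
    (measurable_meas_singleton ξ) (measurableSet_singleton 0)
  have hB : MeasurableSet {t : ℝ | ξ {t} ≠ 0} := hA.compl
  set A := {t : ℝ | ξ {t} = 0} with hAdef
  set B := {t : ℝ | ξ {t} ≠ 0} with hBdef
  -- real-number inequalities
  have hv₁' : v₁ ≤ (ξ {s₁}).toReal + (η {s₁}).toReal := by
    have h1 := le_toReal_of_ofReal_le hv₁0
      (ENNReal.add_ne_top.mpr ⟨meas_singleton_ne_top ξ s₁, meas_singleton_ne_top η s₁⟩)
      (hv₁.trans (max_le le_self_add le_add_self))
    rwa [ENNReal.toReal_add (meas_singleton_ne_top ξ s₁) (meas_singleton_ne_top η s₁)] at h1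
  have hv₂' : v₂ ≤ (ξ {s₂}).toReal + (η {s₂}).toReal := by
    have h1 := le_toReal_of_ofReal_le hv₂0
      (ENNReal.add_ne_top.mpr ⟨meas_singleton_ne_top ξ s₂, meas_singleton_ne_top η s₂⟩)
      (hv₂.trans (max_le le_self_add le_add_self))
    rwa [ENNReal.toReal_add (meas_singleton_ne_top ξ s₂) (meas_singleton_ne_top η s₂)] at h1
  -- zeta inequalities
  have claim1 : ∀ t : ℝ, t < s₁ → zeta ξ η t + (ξ {t}).toReal < L := by
    intro t ht
    have hj := zeta_jump ξ η ht
    have h1 : (0:ℝ) ≤ (η {t}).toReal := ENNReal.toReal_nonneg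
    rw [hL]; linarith
  have claim2 : ∀ t : ℝ, s₂ < t → R < zeta ξ η t := by
    intro t ht
    have hj := zeta_jump ξ η ht
    rw [hR]; linarith
  have claim3 : ∀ t : ℝ, s₁ < t → L < zeta ξ η t := by
    intro t ht
    have hj := zeta_jump ξ η ht
    rw [hL]; linarith
  have claim4 : ∀ t : ℝ, t < s₂ → zeta ξ η t + (ξ {t}).toReal < zeta ξ η s₂ := by
    intro t ht
    have hj := zeta_jump ξ η ht
    have h1 : (0:ℝ) ≤ (η {t}).toReal := ENNReal.toReal_nonneg
    linarith
  have hRz : zeta ξ η s₂ ≤ R := by rw [hR]; linarith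
  -- the diffuse part
  have hd : (diffusePart ξ).map (zeta ξ η) C = ξ (Set.Ioo s₁ s₂ ∩ A) := by
    rw [Measure.map_apply hζm hC, diffusePart, Measure.restrict_apply (hζm hC)]
    refine le_antisymm ?_ (measure_mono (Set.inter_subset_inter_left _ ?_))
    · have hsub : (zeta ξ η ⁻¹' C) ∩ A ⊆
          (Set.Ioo s₁ s₂ ∩ A) ∪ (({s₁} ∩ A) ∪ ({s₂} ∩ A)) := by
        rintro t ⟨ht, htA⟩
        have ht1 : s₁ ≤ t := by
          by_contra hc
          push_neg at hc
          have := claim1 t hc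
          have h2 : (0:ℝ) ≤ (ξ {t}).toReal := ENNReal.toReal_nonneg
          have := ht.1
          simp only [Set.mem_preimage, hCdef, Set.mem_Icc] at ht
          linarith [ht.1]
        have ht2 : t ≤ s₂ := by
          by_contra hc
          push_neg at hc
          have := claim2 t hc
          simp only [Set.mem_preimage, hCdef, Set.mem_Icc] at ht
          linarith [ht.2]
        rcases eq_or_lt_of_le ht1 with he1 | hlt1
        · exact Or.inr (Or.inl ⟨he1.symm ▸ rfl, htA⟩)
        rcases eq_or_lt_of_le ht2 with he2 | hlt2
        · exact Or.inr (Or.inr ⟨he2 ▸ rfl, htA⟩)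
        exact Or.inl ⟨⟨hlt1, hlt2⟩, htA⟩
      have hz1 : ξ ({s₁} ∩ A) = 0 := by
        by_cases hx : ξ {s₁} = 0
        · exact le_antisymm ((measure_mono Set.inter_subset_left).trans hx.le) zero_le
        · have : ({s₁} : Set ℝ) ∩ A = ∅ := by
            apply Set.eq_empty_of_forall_notMem
            rintro x ⟨hx1, hx2⟩
            rw [Set.mem_singleton_iff] at hx1
            subst hx1
            exact hx hx2
          rw [this, measure_empty]
      have hz2 : ξ ({s₂} ∩ A) = 0 := by
        by_cases hx : ξ {s₂} = 0
        · exact le_antisymm ((measure_mono Set.inter_subset_left).trans hx.le) zero_le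
        · have : ({s₂} : Set ℝ) ∩ A = ∅ := by
            apply Set.eq_empty_of_forall_notMem
            rintro x ⟨hx1, hx2⟩
            rw [Set.mem_singleton_iff] at hx1
            subst hx1
            exact hx hx2
          rw [this, measure_empty]
      calc ξ ((zeta ξ η ⁻¹' C) ∩ A)
          ≤ ξ ((Set.Ioo s₁ s₂ ∩ A) ∪ (({s₁} ∩ A) ∪ ({s₂} ∩ A))) := measure_mono hsub
        _ ≤ ξ (Set.Ioo s₁ s₂ ∩ A) + ξ (({s₁} ∩ A) ∪ ({s₂} ∩ A)) := measure_union_le _ _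
        _ ≤ ξ (Set.Ioo s₁ s₂ ∩ A) + (ξ ({s₁} ∩ A) + ξ ({s₂} ∩ A)) :=
            add_le_add le_rfl (measure_union_le _ _)
        _ = ξ (Set.Ioo s₁ s₂ ∩ A) := by rw [hz1, hz2]; simp
    · intro t ht
      have h1 := claim3 t ht.1
      have h2 := claim4 t ht.2
      have h3 : (0:ℝ) ≤ (ξ {t}).toReal := ENNReal.toReal_nonneg
      simp only [Set.mem_preimage, hCdef, Set.mem_Icc]
      constructor <;> linarith
  -- the atomic part
  set g : ℝ → ℝ≥0∞ := fun t =>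
    (ξ {t})⁻¹ * volume (C ∩ Set.Icc (zeta ξ η t) (zeta ξ η t + (ξ {t}).toReal)) with hg
  have hfin : ∀ t : ℝ, ξ {t} ≠ ⊤ := meas_singleton_ne_top ξ
  have hb : (atomicPart ξ).bind (fun t =>
      (ξ {t})⁻¹ • volume.restrict (Set.Icc (zeta ξ η t) (zeta ξ η t + (ξ {t}).toReal))) C
      = ∫⁻ t in B, g t ∂ξ := by
    rw [Measure.bind_apply hC (measurable_kernel ξ η).aemeasurable]
    simp only [Measure.smul_apply, Measure.restrict_apply hC, smul_eq_mul]
    rfl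
  have g0a : ∀ t : ℝ, t < s₁ → g t = 0 := by
    intro t ht
    have hempty : C ∩ Set.Icc (zeta ξ η t) (zeta ξ η t + (ξ {t}).toReal) = ∅ := by
      apply Set.eq_empty_of_forall_notMem
      rintro y ⟨hy1, hy2⟩
      rw [hCdef, Set.mem_Icc] at hy1
      rw [Set.mem_Icc] at hy2
      linarith [claim1 t ht, hy1.1, hy2.2]
    simp [hg, hempty]
  have g0b : ∀ t : ℝ, s₂ < t → g t = 0 := by
    intro t ht
    have hempty : C ∩ Set.Icc (zeta ξ η t) (zeta ξ η t + (ξ {t}).toReal) = ∅ := by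
      apply Set.eq_empty_of_forall_notMem
      rintro y ⟨hy1, hy2⟩
      rw [hCdef, Set.mem_Icc] at hy1
      rw [Set.mem_Icc] at hy2
      linarith [claim2 t ht, hy1.2, hy2.1]
    simp [hg, hempty]
  have g1 : ∀ t ∈ Set.Ioo s₁ s₂, ξ {t} ≠ 0 → g t = 1 := by
    intro t ht h0
    have hsub : Set.Icc (zeta ξ η t) (zeta ξ η t + (ξ {t}).toReal) ⊆ C := by
      rw [hCdef]
      exact Set.Icc_subset_Icc (claim3 t ht.1).le (by linarith [claim4 t ht.2, hRz])
    simp only [hg]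
    rw [Set.inter_eq_self_of_subset_right hsub, Real.volume_Icc,
      show zeta ξ η t + (ξ {t}).toReal - zeta ξ η t = (ξ {t}).toReal by ring,
      ENNReal.ofReal_toReal (hfin t), ENNReal.inv_mul_cancel h0 (hfin t)]
  have gs1 : ξ {s₁} ≠ 0 → g s₁ * ξ {s₁} = ξ {s₁} - ENNReal.ofReal v₁ := by
    intro h0
    have hη : η {s₁} = 0 := atoms_disjoint hsing h0
    have hv : v₁ ≤ (ξ {s₁}).toReal := by
      have h2 : ENNReal.ofReal v₁ ≤ ξ {s₁} := by simpa [hη] using hv₁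
      exact le_toReal_of_ofReal_le hv₁0 (hfin s₁) h2
    have hint : C ∩ Set.Icc (zeta ξ η s₁) (zeta ξ η s₁ + (ξ {s₁}).toReal)
        = Set.Icc L (zeta ξ η s₁ + (ξ {s₁}).toReal) := by
      rw [hCdef, Set.Icc_inter_Icc,
        max_eq_left (show zeta ξ η s₁ ≤ L by rw [hL]; linarith),
        min_eq_right (show zeta ξ η s₁ + (ξ {s₁}).toReal ≤ R by linarith [claim4 s₁ h, hRz])]
    simp only [hg]
    rw [hint, Real.volume_Icc, hL,
      show zeta ξ η s₁ + (ξ {s₁}).toReal - (zeta ξ η s₁ + v₁) = (ξ {s₁}).toReal - v₁ by ring,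
      ENNReal.ofReal_sub _ hv₁0, ENNReal.ofReal_toReal (hfin s₁),
      mul_comm ((ξ {s₁})⁻¹) _, mul_assoc, ENNReal.inv_mul_cancel h0 (hfin s₁), mul_one]
  have gs2 : ξ {s₂} ≠ 0 → g s₂ * ξ {s₂} = ENNReal.ofReal v₂ := by
    intro h0
    have hη : η {s₂} = 0 := atoms_disjoint hsing h0
    have hv : v₂ ≤ (ξ {s₂}).toReal := by
      have h2 : ENNReal.ofReal v₂ ≤ ξ {s₂} := by simpa [hη] using hv₂
      exact le_toReal_of_ofReal_le hv₂0 (hfin s₂) h2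
    have hint : C ∩ Set.Icc (zeta ξ η s₂) (zeta ξ η s₂ + (ξ {s₂}).toReal)
        = Set.Icc (zeta ξ η s₂) R := by
      rw [hCdef, Set.Icc_inter_Icc,
        max_eq_right (show L ≤ zeta ξ η s₂ from (claim3 s₂ h).le),
        min_eq_left (show R ≤ zeta ξ η s₂ + (ξ {s₂}).toReal by rw [hR]; linarith)]
    simp only [hg]
    rw [hint, Real.volume_Icc, hR,
      show zeta ξ η s₂ + v₂ - zeta ξ η s₂ = v₂ by ring,
      mul_comm ((ξ {s₂})⁻¹) _, mul_assoc, ENNReal.inv_mul_cancel h0 (hfin s₂), mul_one]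
  -- computing the integral over the atoms
  have hgF : ∀ t ∈ B, g t =
      (Set.Ioo s₁ s₂).indicator (fun _ => (1 : ℝ≥0∞)) t
        + ({s₁} : Set ℝ).indicator (fun _ => g s₁) t
        + ({s₂} : Set ℝ).indicator (fun _ => g s₂) t := by
    intro t htB
    rw [hBdef, Set.mem_setOf_eq] at htB
    rcases lt_trichotomy t s₁ with h1 | h1 | h1
    · have hn : ¬ (s₁ < t ∧ t < s₂) := fun hc => absurd (h1.trans hc.1) (lt_irrefl t)
      rw [g0a t h1]
      rw [Set.indicator_of_notMem (by rw [Set.mem_Ioo]; exact hn),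
        Set.indicator_of_notMem (by simp [h1.ne]),
        Set.indicator_of_notMem (by simp [(h1.trans h).ne])]
      simp
    · subst h1
      rw [Set.indicator_of_notMem (by simp),
        Set.indicator_of_mem (Set.mem_singleton t),
        Set.indicator_of_notMem (by simp [h.ne])]
      simp
    · rcases lt_trichotomy t s₂ with h2 | h2 | h2
      · rw [g1 t ⟨h1, h2⟩ htB,
          Set.indicator_of_mem (Set.mem_Ioo.2 ⟨h1, h2⟩),
          Set.indicator_of_notMem (by simp [h1.ne']),
          Set.indicator_of_notMem (by simp [h2.ne])]
        simp
      · subst h2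
        rw [Set.indicator_of_notMem (by simp),
          Set.indicator_of_notMem (by simp [h1.ne']),
          Set.indicator_of_mem (Set.mem_singleton t)]
        simp
      · rw [g0b t h2,
          Set.indicator_of_notMem (by rw [Set.mem_Ioo]; exact fun hc => absurd (h2.trans hc.2) (lt_irrefl s₂)),
          Set.indicator_of_notMem (by simp [(h.trans h2).ne']),
          Set.indicator_of_notMem (by simp [h2.ne'])]
        simp
  have hintegral : ∫⁻ t in B, g t ∂ξ
      = ξ (Set.Ioo s₁ s₂ ∩ B) + g s₁ * ξ ({s₁} ∩ B) + g s₂ * ξ ({s₂} ∩ B) := by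
    rw [setLIntegral_congr_fun hB hgF]
    rw [lintegral_add_right _ (measurable_const.indicator (measurableSet_singleton s₂)),
      lintegral_add_right _ (measurable_const.indicator (measurableSet_singleton s₁)),
      lintegral_indicator_const measurableSet_Ioo,
      lintegral_indicator_const (measurableSet_singleton s₁),
      lintegral_indicator_const (measurableSet_singleton s₂),
      Measure.restrict_apply measurableSet_Ioo,
      Measure.restrict_apply (measurableSet_singleton s₁),
      Measure.restrict_apply (measurableSet_singleton s₂), one_mul]
  have hT1 : g s₁ * ξ ({s₁} ∩ B) = (if η {s₁} = 0 then ξ {s₁} - ENNReal.ofReal v₁ else 0) := by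
    by_cases h0 : ξ {s₁} = 0
    · have hz : ξ ({s₁} ∩ B) = 0 :=
        le_antisymm ((measure_mono Set.inter_subset_left).trans h0.le) zero_le
      rw [hz, mul_zero]
      by_cases hη : η {s₁} = 0
      · rw [if_pos hη, h0, zero_tsub]
      · rw [if_neg hη]
    · have hη : η {s₁} = 0 := atoms_disjoint hsing h0
      have hBs : ({s₁} : Set ℝ) ∩ B = {s₁} :=
        Set.inter_eq_self_of_subset_left (Set.singleton_subset_iff.2 h0)
      rw [hBs, gs1 h0, if_pos hη]
  have hT2 : g s₂ * ξ ({s₂} ∩ B) = (if η {s₂} = 0 then ENNReal.ofReal v₂ else 0) := by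
    by_cases h0 : ξ {s₂} = 0
    · have hz : ξ ({s₂} ∩ B) = 0 :=
        le_antisymm ((measure_mono Set.inter_subset_left).trans h0.le) zero_le
      rw [hz, mul_zero]
      by_cases hη : η {s₂} = 0
      · rw [if_pos hη]
        refine (le_antisymm ?_ zero_le).symm
        calc ENNReal.ofReal v₂ ≤ max (ξ {s₂}) (η {s₂}) := hv₂
          _ = 0 := by rw [h0, hη, max_self]
      · rw [if_neg hη]
    · have hη : η {s₂} = 0 := atoms_disjoint hsing h0
      have hBs : ({s₂} : Set ℝ) ∩ B = {s₂} :=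
        Set.inter_eq_self_of_subset_left (Set.singleton_subset_iff.2 h0)
      rw [hBs, gs2 h0, if_pos hη]
  have hsplit : ξ (Set.Ioo s₁ s₂ ∩ A) + ξ (Set.Ioo s₁ s₂ ∩ B) = ξ (Set.Ioo s₁ s₂) := by
    have hBd : Set.Ioo s₁ s₂ ∩ B = Set.Ioo s₁ s₂ \ A := by
      ext x
      simp [hAdef, hBdef, Set.mem_diff]
    rw [hBd]
    exact measure_inter_add_diff _ hA
  rw [show starM ξ η ξ = (diffusePart ξ).map (zeta ξ η) +
      (atomicPart ξ).bind (fun t => (ξ {t})⁻¹ • volume.restrict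
        (Set.Icc (zeta ξ η t) (zeta ξ η t + (ξ {t}).toReal))) from rfl,
    Measure.add_apply, hd, hb, hintegral, hT1, hT2, ← hsplit]
  abel
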